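/- Fix c* > 0 and K = d_sr^α d_k^α λ_q² > 0, and define for each transmit SNR ρ > 0 the passive-RIS perfect-SIC outage probability P(ρ) = F(√(c* K / ρ)). Then lim_{ρ→∞} ρ^{(μ₀+1)/2} · P(ρ) = (c* K)^{(μ₀+1)/2} / (Γ(μ₀+2) · φ₀^{μ₀+1}). -/

import Mathlib

open MeasureTheory ProbabilityTheory Topology Filter

/-- Lower incomplete gamma function `γ(s, x) = ∫₀ˣ t^{s-1} e^{-t} dt`. -/
noncomputable def lowerGamma (s x : ℝ) : ℝ := ∫ t in (0:ℝ)..x, t ^ (s - 1) * Real.exp (-t)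

/-- `μ₀ = ((M+1)π² − 16)/(16 − π²)`. -/
noncomputable def mu0 (M : ℕ) : ℝ := (((M : ℝ) + 1) * Real.pi ^ 2 - 16) / (16 - Real.pi ^ 2)

/-- `φ₀ = (16 − π²)/(4π)`. -/
noncomputable def phi0 : ℝ := (16 - Real.pi ^ 2) / (4 * Real.pi)

/-- The CDF of the Gamma distribution with shape `μ₀+1` and scale `φ₀`:
`F(x) = γ(μ₀+1, x/φ₀)/Γ(μ₀+1)`. -/
noncomputable def F (M : ℕ) (x : ℝ) : ℝ :=
  lowerGamma (mu0 M + 1) (x / phi0) / Real.Gamma (mu0 M + 1)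

lemma lowerGamma_bounds {s x : ℝ} (hs : 0 < s) (hx : 0 < x) :
    Real.exp (-x) * (x ^ s / s) ≤ lowerGamma s x ∧ lowerGamma s x ≤ x ^ s / s := by
  have hr : (-1 : ℝ) < s - 1 := by linarith
  have hint : IntervalIntegrable (fun t : ℝ => t ^ (s - 1)) volume 0 x :=
    intervalIntegral.intervalIntegrable_rpow' hr
  have hintf : IntervalIntegrable (fun t : ℝ => t ^ (s - 1) * Real.exp (-t)) volume 0 x :=
    hint.mul_continuousOn ((Real.continuous_exp.comp continuous_neg).continuousOn)
  have hintg : IntervalIntegrable (fun t : ℝ => t ^ (s - 1) * Real.exp (-x)) volume 0 x :=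
    hint.mul_const _
  have hval : (∫ t in (0:ℝ)..x, t ^ (s - 1)) = x ^ s / s := by
    rw [integral_rpow (Or.inl hr)]
    rw [Real.zero_rpow (by linarith : s - 1 + 1 ≠ 0)]
    ring_nf
  constructor
  · have hle : ∀ t ∈ Set.Icc (0:ℝ) x, t ^ (s - 1) * Real.exp (-x) ≤ t ^ (s - 1) * Real.exp (-t) := by
      intro t ht
      have h1 : (0:ℝ) ≤ t ^ (s - 1) := Real.rpow_nonneg ht.1 _
      exact mul_le_mul_of_nonneg_left (Real.exp_le_exp.mpr (by linarith [ht.2])) h1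
    have := intervalIntegral.integral_mono_on hx.le hintg hintf hle
    calc Real.exp (-x) * (x ^ s / s) = ∫ t in (0:ℝ)..x, t ^ (s - 1) * Real.exp (-x) := by
          rw [intervalIntegral.integral_mul_const, hval]; ring
      _ ≤ lowerGamma s x := this
  · have hle : ∀ t ∈ Set.Icc (0:ℝ) x, t ^ (s - 1) * Real.exp (-t) ≤ t ^ (s - 1) := by
      intro t ht
      have h1 : (0:ℝ) ≤ t ^ (s - 1) := Real.rpow_nonneg ht.1 _
      calc t ^ (s - 1) * Real.exp (-t) ≤ t ^ (s - 1) * 1 :=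
            mul_le_mul_of_nonneg_left (Real.exp_le_one_iff.mpr (by linarith [ht.1])) h1
        _ = t ^ (s - 1) := mul_one _
    have := intervalIntegral.integral_mono_on hx.le hintf hint hle
    calc lowerGamma s x ≤ ∫ t in (0:ℝ)..x, t ^ (s - 1) := this
      _ = x ^ s / s := hval

lemma lowerGamma_ratio_tendsto {s : ℝ} (hs : 0 < s) :
    Tendsto (fun x : ℝ => lowerGamma s x / x ^ s) (𝓝[>] 0) (𝓝 (1 / s)) := by
  have hlow : Tendsto (fun x : ℝ => Real.exp (-x) * (1 / s)) (𝓝[>] 0) (𝓝 (1 / s)) := by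
    have h1 : Tendsto (fun x : ℝ => Real.exp (-x)) (𝓝 (0:ℝ)) (𝓝 1) := by
      have := (Real.continuous_exp.comp continuous_neg).tendsto 0
      simpa [Function.comp_def] using this
    simpa using (h1.mono_left nhdsWithin_le_nhds).mul_const (1 / s)
  refine tendsto_of_tendsto_of_tendsto_of_le_of_le' hlow tendsto_const_nhds ?_ ?_
  · filter_upwards [self_mem_nhdsWithin] with x hx
    have hx : (0:ℝ) < x := hx
    have hxs : (0:ℝ) < x ^ s := Real.rpow_pos_of_pos hx s
    have h := (lowerGamma_bounds hs hx).1
    have hrw : Real.exp (-x) * (1/s) = (Real.exp (-x) * (x ^ s / s)) / x ^ s := by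
      field_simp
    rw [hrw]
    gcongr
  · filter_upwards [self_mem_nhdsWithin] with x hx
    have hx : (0:ℝ) < x := hx
    have hxs : (0:ℝ) < x ^ s := Real.rpow_pos_of_pos hx s
    have h := (lowerGamma_bounds hs hx).2
    have h2 : lowerGamma s x * s ≤ x ^ s := (le_div_iff₀ hs).mp h
    rw [div_le_div_iff₀ hxs hs]
    linarith

/-- **Asymptotic OP (PRIS-NOMA, perfect SIC)**: with `K = d_sr^α d_k^α λ_q²` and
`P(ρ) = F(√(c* K/ρ))`,
`lim_{ρ→∞} ρ^{(μ₀+1)/2} P(ρ) = (c* K)^{(μ₀+1)/2} / (Γ(μ₀+2) φ₀^{μ₀+1})`. -/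
theorem asymptotic_outage_PRIS_NOMA_pSIC
    (M : ℕ) (hM : 0 < M)
    (c lamq alpha dsr dk : ℝ)
    (hc : 0 < c) (hlam0 : 0 < lamq) (hlam1 : lamq ≤ 1)
    (halpha : 0 < alpha) (hdsr : 0 < dsr) (hdk : 0 < dk)
    (K : ℝ) (hK : K = dsr ^ alpha * dk ^ alpha * lamq ^ 2) :
    Filter.Tendsto
      (fun rho : ℝ => rho ^ ((mu0 M + 1) / 2) * F M (Real.sqrt (c * K / rho)))
      Filter.atTop
      (𝓝 ((c * K) ^ ((mu0 M + 1) / 2) /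
        (Real.Gamma (mu0 M + 2) * phi0 ^ (mu0 M + 1)))) := by
  have hpi : (3:ℝ) < Real.pi := Real.pi_gt_three
  have hpi2 : Real.pi < 3.15 := Real.pi_lt_d2
  have hphi : 0 < phi0 := by
    unfold phi0; apply div_pos <;> nlinarith
  set s : ℝ := mu0 M + 1 with hsdef
  have hmu : 0 < mu0 M := by
    unfold mu0
    apply div_pos
    · have : (1:ℝ) ≤ (M:ℝ) := by exact_mod_cast hM
      nlinarith
    · nlinarith
  have hs : 0 < s := by rw [hsdef]; linarith
  have hcK : 0 < c * K := by
    have : 0 < K := by rw [hK]; positivity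
    positivity
  have hGamma : 0 < Real.Gamma s := Real.Gamma_pos_of_pos hs
  set C : ℝ := (c * K) ^ (s / 2) / (phi0 ^ s * Real.Gamma s) with hCdef
  have hy : Tendsto (fun rho : ℝ => Real.sqrt (c * K / rho) / phi0) atTop (𝓝[>] 0) := by
    apply tendsto_nhdsWithin_of_tendsto_nhds_of_eventually_within
    · have h1 : Tendsto (fun rho : ℝ => c * K / rho) atTop (𝓝 0) :=
        Tendsto.div_atTop tendsto_const_nhds tendsto_id
      have h2 := (Real.continuous_sqrt.tendsto 0).comp h1
      simp only [Real.sqrt_zero] at h2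
      simpa using h2.div_const phi0
    · filter_upwards [eventually_gt_atTop (0:ℝ)] with rho hrho
      have : 0 < Real.sqrt (c * K / rho) := Real.sqrt_pos.mpr (by positivity)
      exact div_pos this hphi
  have hmain := ((lowerGamma_ratio_tendsto hs).comp hy).mul_const C
  have heq : (fun rho : ℝ =>
        (lowerGamma s (Real.sqrt (c * K / rho) / phi0) /
          (Real.sqrt (c * K / rho) / phi0) ^ s) * C)
      =ᶠ[atTop] (fun rho : ℝ => rho ^ (s / 2) * F M (Real.sqrt (c * K / rho))) := by
    filter_upwards [eventually_gt_atTop (0:ℝ)] with rho hrho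
    have hq : 0 < c * K / rho := by positivity
    have hys : (Real.sqrt (c * K / rho) / phi0) ^ s
        = (c * K) ^ (s/2) / rho ^ (s/2) / phi0 ^ s := by
      rw [Real.div_rpow (Real.sqrt_nonneg _) hphi.le, Real.sqrt_eq_rpow,
        ← Real.rpow_mul hq.le, Real.div_rpow hcK.le hrho.le]
      norm_num
      rw [show (1:ℝ)/2*s = s/2 by ring]
    have hrs : (0:ℝ) < rho ^ (s/2) := Real.rpow_pos_of_pos hrho _
    have hcs : (0:ℝ) < (c*K) ^ (s/2) := Real.rpow_pos_of_pos hcK _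
    have hps : (0:ℝ) < phi0 ^ s := Real.rpow_pos_of_pos hphi _
    show _ = rho ^ (s / 2) * F M (Real.sqrt (c * K / rho))
    rw [F, hys]
    show lowerGamma s (Real.sqrt (c*K/rho) / phi0) / _ * C
        = rho ^ (s/2) * (lowerGamma s (Real.sqrt (c*K/rho) / phi0) / Real.Gamma s)
    rw [hCdef]
    field_simp
  have hfinal := hmain.congr' heq
  have hval : 1 / s * C = (c * K) ^ ((mu0 M + 1) / 2) /
      (Real.Gamma (mu0 M + 2) * phi0 ^ (mu0 M + 1)) := by
    have hG2 : Real.Gamma (mu0 M + 2) = s * Real.Gamma s := by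
      rw [show mu0 M + 2 = s + 1 by rw [hsdef]; ring, Real.Gamma_add_one hs.ne']
    rw [hG2, hCdef, ← hsdef]
    field_simp
    try ring
    try tauto
  rw [hsdef, ← hval]
  exact hfinal
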